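/- Second Jacobian rule (eq. SandM, second rule): fix ξ ∈ ℂ and N×N complex matrices A and B. For every N×N complex matrix M such that ξ·I − M is invertible, the map F(M) = tr((ξ·I − M)⁻¹ A) · B is differentiable at M and its divergence satisfies div F(M) = tr( (ξ·I − M)⁻¹ A (ξ·I − M)⁻¹ B ). -/

import Mathlib

open Matrix

attribute [local instance] Matrix.normedAddCommGroup Matrix.normedSpace

/-- The divergence of a map `F` on `N×N` complex matrices at `M`:
`div F (M) = ∑_{i,j} (D F_{ij})(M)[E_{ij}]`, where `E_{ij}` is the elementary matrix. -/
noncomputable def matrixDivergence {N : ℕ}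
    (F : Matrix (Fin N) (Fin N) ℂ → Matrix (Fin N) (Fin N) ℂ)
    (M : Matrix (Fin N) (Fin N) ℂ) : ℂ :=
  ∑ i : Fin N, ∑ j : Fin N,
    fderiv ℂ (fun X => F X i j) M (Matrix.single i j (1 : ℂ))

section Aux
variable {N : ℕ}

lemma mydiff_entry (p q : Fin N) : Differentiable ℂ (fun X : Matrix (Fin N) (Fin N) ℂ => X p q) :=
  differentiable_pi.mp (differentiable_pi.mp differentiable_id p) q

lemma mydiff_prod {E : Type*} [NormedAddCommGroup E] [NormedSpace ℂ E] {ι : Type*} [DecidableEq ι]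
    {u : Finset ι} {f : ι → E → ℂ} {x : E} (h : ∀ i ∈ u, DifferentiableAt ℂ (f i) x) :
    DifferentiableAt ℂ (fun y => ∏ i ∈ u, f i y) x :=
  (HasFDerivAt.finset_prod (fun i hi => (h i hi).hasFDerivAt)).differentiableAt

lemma mydiff_det : Differentiable ℂ (fun X : Matrix (Fin N) (Fin N) ℂ => X.det) := by
  have : (fun X : Matrix (Fin N) (Fin N) ℂ => X.det)
      = fun X => ∑ σ : Equiv.Perm (Fin N), (Equiv.Perm.sign σ : ℂ) * ∏ i, X (σ i) i := by
    funext X; rw [Matrix.det_apply]; congr 1; funext σ; simp [Units.smul_def, zsmul_eq_mul]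
  rw [this]
  apply Differentiable.fun_sum
  intro σ _
  exact fun x => ((mydiff_prod (fun i _ => (mydiff_entry (σ i) i).differentiableAt)).const_mul _)

lemma mydiff_updateRow (j : Fin N) (c : Fin N → ℂ) :
    Differentiable ℂ (fun X : Matrix (Fin N) (Fin N) ℂ => X.updateRow j c) := by
  refine differentiable_pi.mpr fun p => differentiable_pi.mpr fun q => ?_
  by_cases h : p = j
  · subst h; simp only [Matrix.updateRow_self]; exact differentiable_const _
  · simp only [Matrix.updateRow_ne h]; exact mydiff_entry p q

lemma mydiff_adj (p q : Fin N) :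
    Differentiable ℂ (fun X : Matrix (Fin N) (Fin N) ℂ => X.adjugate p q) := by
  have : (fun X : Matrix (Fin N) (Fin N) ℂ => X.adjugate p q)
      = fun X => (X.updateRow q (Pi.single p 1)).det := by
    funext X; rw [Matrix.adjugate_apply]
  rw [this]
  exact mydiff_det.comp (mydiff_updateRow q _)

lemma myinv_entry (X : Matrix (Fin N) (Fin N) ℂ) (p q : Fin N) :
    X⁻¹ p q = (X.det)⁻¹ * X.adjugate p q := by
  rw [Matrix.inv_def]
  simp [Matrix.smul_apply, smul_eq_mul, Ring.inverse_eq_inv']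

lemma mydiff_inv_entry {M : Matrix (Fin N) (Fin N) ℂ} (h : M.det ≠ 0) (p q : Fin N) :
    DifferentiableAt ℂ (fun X : Matrix (Fin N) (Fin N) ℂ => X⁻¹ p q) M := by
  have : (fun X : Matrix (Fin N) (Fin N) ℂ => X⁻¹ p q)
      = fun X => (X.det)⁻¹ * X.adjugate p q := by funext X; exact myinv_entry X p q
  rw [this]
  exact ((mydiff_det.differentiableAt.inv h).mul (mydiff_adj p q).differentiableAt)variable {N : ℕ}

noncomputable def entryCLM (p q : Fin N) : Matrix (Fin N) (Fin N) ℂ →L[ℂ] ℂ :=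
  (ContinuousLinearMap.proj q).comp (ContinuousLinearMap.proj (R := ℂ) (φ := fun _ : Fin N => Fin N → ℂ) p)

lemma entryCLM_apply (p q : Fin N) (X : Matrix (Fin N) (Fin N) ℂ) : entryCLM p q X = X p q := rfl

lemma entryCLM_hasFDerivAt (p q : Fin N) (M : Matrix (Fin N) (Fin N) ℂ) :
    HasFDerivAt (fun X : Matrix (Fin N) (Fin N) ℂ => X p q) (entryCLM p q) M :=
  (entryCLM p q).hasFDerivAt

section Key
variable {ξ : ℂ} {M : Matrix (Fin N) (Fin N) ℂ}

lemma mydiff_res (hdet : (ξ • (1 : Matrix (Fin N) (Fin N) ℂ) - M).det ≠ 0) (p q : Fin N) :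
    DifferentiableAt ℂ (fun X : Matrix (Fin N) (Fin N) ℂ =>
      (ξ • (1 : Matrix (Fin N) (Fin N) ℂ) - X)⁻¹ p q) M := by
  have hφ : DifferentiableAt ℂ (fun X : Matrix (Fin N) (Fin N) ℂ =>
      ξ • (1 : Matrix (Fin N) (Fin N) ℂ) - X) M :=
    (differentiableAt_const _).sub differentiableAt_id
  exact (mydiff_inv_entry hdet p q).comp M hφ

lemma hasfd_aff (p k : Fin N) :
    HasFDerivAt (fun X : Matrix (Fin N) (Fin N) ℂ =>
      (ξ • (1 : Matrix (Fin N) (Fin N) ℂ) - X) p k)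
      ((0 : Matrix (Fin N) (Fin N) ℂ →L[ℂ] ℂ) - entryCLM p k) M := by
  have : (fun X : Matrix (Fin N) (Fin N) ℂ => (ξ • (1 : Matrix (Fin N) (Fin N) ℂ) - X) p k)
      = fun X => (ξ • (1 : Matrix (Fin N) (Fin N) ℂ)) p k - X p k := by
    funext X; simp [Matrix.sub_apply]
  rw [this]
  exact (hasFDerivAt_const _ _).sub (entryCLM_hasFDerivAt p k M)

lemma key (hdet : (ξ • (1 : Matrix (Fin N) (Fin N) ℂ) - M).det ≠ 0)
    (E : Matrix (Fin N) (Fin N) ℂ) (p q : Fin N) :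
    fderiv ℂ (fun X : Matrix (Fin N) (Fin N) ℂ =>
        (ξ • (1 : Matrix (Fin N) (Fin N) ℂ) - X)⁻¹ p q) M E
      = ((ξ • (1 : Matrix (Fin N) (Fin N) ℂ) - M)⁻¹ * E *
          (ξ • (1 : Matrix (Fin N) (Fin N) ℂ) - M)⁻¹) p q := by
  set S : Matrix (Fin N) (Fin N) ℂ := ξ • (1 : Matrix (Fin N) (Fin N) ℂ) - M with hS
  set R : Matrix (Fin N) (Fin N) ℂ := S⁻¹ with hR
  set D : Matrix (Fin N) (Fin N) ℂ := Matrix.of fun k l =>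
    fderiv ℂ (fun X : Matrix (Fin N) (Fin N) ℂ =>
      (ξ • (1 : Matrix (Fin N) (Fin N) ℂ) - X)⁻¹ k l) M E with hD
  -- eventual invertibility
  have hdetcont : ContinuousAt (fun X : Matrix (Fin N) (Fin N) ℂ =>
      (ξ • (1 : Matrix (Fin N) (Fin N) ℂ) - X).det) M := by
    have : DifferentiableAt ℂ (fun X : Matrix (Fin N) (Fin N) ℂ =>
        (ξ • (1 : Matrix (Fin N) (Fin N) ℂ) - X).det) M :=
      mydiff_det.differentiableAt.comp M ((differentiableAt_const _).sub differentiableAt_id)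
    exact this.continuousAt
  have hev : ∀ᶠ X in nhds M, ((ξ • (1 : Matrix (Fin N) (Fin N) ℂ) - X).det) ≠ 0 :=
    hdetcont.eventually_ne hdet
  -- the key linear identity
  have hmain : ∀ p' q' : Fin N, (S * D) p' q' = (E * R) p' q' := by
    intro p' q'
    have hg : ∀ k : Fin N, DifferentiableAt ℂ (fun X : Matrix (Fin N) (Fin N) ℂ =>
        (ξ • (1 : Matrix (Fin N) (Fin N) ℂ) - X)⁻¹ k q') M := fun k => mydiff_res hdet k q'
    have hsum_eq : (fun X : Matrix (Fin N) (Fin N) ℂ =>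
        ∑ k, (ξ • (1 : Matrix (Fin N) (Fin N) ℂ) - X) p' k *
          (ξ • (1 : Matrix (Fin N) (Fin N) ℂ) - X)⁻¹ k q')
        =ᶠ[nhds M] fun _ => (1 : Matrix (Fin N) (Fin N) ℂ) p' q' := by
      filter_upwards [hev] with X hX
      rw [← Matrix.mul_apply, Matrix.mul_nonsing_inv _ (isUnit_iff_ne_zero.mpr hX)]
    have h0 : fderiv ℂ (fun X : Matrix (Fin N) (Fin N) ℂ =>
        ∑ k, (ξ • (1 : Matrix (Fin N) (Fin N) ℂ) - X) p' k *
          (ξ • (1 : Matrix (Fin N) (Fin N) ℂ) - X)⁻¹ k q') M = 0 := by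
      rw [hsum_eq.fderiv_eq]; exact fderiv_const_apply _
    have h1 : fderiv ℂ (fun X : Matrix (Fin N) (Fin N) ℂ =>
        ∑ k, (ξ • (1 : Matrix (Fin N) (Fin N) ℂ) - X) p' k *
          (ξ • (1 : Matrix (Fin N) (Fin N) ℂ) - X)⁻¹ k q') M
        = ∑ k, fderiv ℂ (fun X : Matrix (Fin N) (Fin N) ℂ =>
            (ξ • (1 : Matrix (Fin N) (Fin N) ℂ) - X) p' k *
              (ξ • (1 : Matrix (Fin N) (Fin N) ℂ) - X)⁻¹ k q') M :=
      fderiv_fun_sum fun k _ => ((hasfd_aff p' k).differentiableAt.mul (hg k))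
    have h2 : ∀ k, fderiv ℂ (fun X : Matrix (Fin N) (Fin N) ℂ =>
        (ξ • (1 : Matrix (Fin N) (Fin N) ℂ) - X) p' k *
          (ξ • (1 : Matrix (Fin N) (Fin N) ℂ) - X)⁻¹ k q') M E
        = S p' k * D k q' + R k q' * (-(E p' k)) := by
      intro k
      erw [fderiv_fun_mul (hasfd_aff (ξ := ξ) p' k).differentiableAt (hg k), (hasfd_aff (ξ := ξ) p' k).fderiv]
      simp only [ContinuousLinearMap.add_apply, ContinuousLinearMap.smul_apply,
        ContinuousLinearMap.sub_apply, ContinuousLinearMap.zero_apply, entryCLM_apply,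
        smul_eq_mul, zero_sub, mul_neg, ContinuousLinearMap.neg_apply]
      exact (congrArg₂ (· + ·) rfl (mul_neg _ _) :
        S p' k * D k q' + R k q' * (-(E p' k)) = S p' k * D k q' + -(R k q' * E p' k))
    have h3 : ∑ k, (S p' k * D k q' + R k q' * (-(E p' k))) = 0 := by
      have hLE : (∑ k, fderiv ℂ (fun X : Matrix (Fin N) (Fin N) ℂ =>
          (ξ • (1 : Matrix (Fin N) (Fin N) ℂ) - X) p' k *
            (ξ • (1 : Matrix (Fin N) (Fin N) ℂ) - X)⁻¹ k q') M) E = 0 := by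
        rw [← h1, h0]; rfl
      rw [ContinuousLinearMap.sum_apply] at hLE
      rw [← hLE]
      exact Finset.sum_congr rfl fun k _ => (h2 k).symm
    rw [Matrix.mul_apply, Matrix.mul_apply]
    rw [Finset.sum_add_distrib] at h3
    rw [eq_neg_of_add_eq_zero_left h3, ← Finset.sum_neg_distrib]
    exact Finset.sum_congr rfl fun k _ => by ring
  have hmat : S * D = E * R := by
    ext p' q'; exact hmain p' q'
  have hRS : R * S = 1 := Matrix.nonsing_inv_mul _ (isUnit_iff_ne_zero.mpr hdet)
  have hDval : D = R * E * R := by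
    calc D = 1 * D := (one_mul D).symm
    _ = (R * S) * D := by rw [hRS]
    _ = R * (S * D) := by rw [mul_assoc]
    _ = R * (E * R) := by rw [hmat]
    _ = R * E * R := (mul_assoc _ _ _).symm
  show D p q = (R * E * R) p q
  rw [hDval]

end Key

lemma mul_std_mul (Rm R' : Matrix (Fin N) (Fin N) ℂ) (i j p k : Fin N) :
    (Rm * Matrix.single i j (1 : ℂ) * R') p k = Rm p i * R' j k := by
  rw [mul_assoc, Matrix.mul_apply]
  have : ∀ a, (Matrix.single i j (1 : ℂ) * R') a k
      = if a = i then R' j k else 0 := by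
    intro a
    by_cases h : a = i
    · subst h; simp
    · simp [h]
  simp [this, Finset.sum_ite_eq, mul_ite]

lemma alg_trace (R A B : Matrix (Fin N) (Fin N) ℂ) :
    ∑ i : Fin N, ∑ j : Fin N, B i j * (∑ p : Fin N, ∑ k : Fin N, A k p * (R p i * R j k))
      = (R * A * R * B).trace := by
  rw [Finset.sum_comm]
  simp only [Matrix.trace, Matrix.diag, Matrix.mul_apply, Finset.sum_mul, Finset.mul_sum]
  refine Finset.sum_congr rfl fun j _ => Finset.sum_congr rfl fun i _ =>
    Finset.sum_congr rfl fun p _ => Finset.sum_congr rfl fun k _ => by ring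

end Aux

set_option maxHeartbeats 1000000 in
/-- Second Jacobian rule (eq. SandM, second rule): for `F(M) = tr((ξ·I − M)⁻¹ A) · B`,
whenever `ξ·I − M` is invertible, `F` is differentiable at `M` and
`div F (M) = tr( (ξ·I − M)⁻¹ A (ξ·I − M)⁻¹ B )`. -/
theorem jacobian_rule_trace_resolvent_times_const (N : ℕ) (ξ : ℂ)
    (A B M : Matrix (Fin N) (Fin N) ℂ)
    (hM : IsUnit (ξ • (1 : Matrix (Fin N) (Fin N) ℂ) - M)) :
    DifferentiableAt ℂ (fun X : Matrix (Fin N) (Fin N) ℂ =>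
        ((ξ • (1 : Matrix (Fin N) (Fin N) ℂ) - X)⁻¹ * A).trace • B) M ∧
      matrixDivergence (fun X => ((ξ • (1 : Matrix (Fin N) (Fin N) ℂ) - X)⁻¹ * A).trace • B) M
        = ((ξ • (1 : Matrix (Fin N) (Fin N) ℂ) - M)⁻¹ * A *
            (ξ • (1 : Matrix (Fin N) (Fin N) ℂ) - M)⁻¹ * B).trace := by
  have hdet : (ξ • (1 : Matrix (Fin N) (Fin N) ℂ) - M).det ≠ 0 :=
    isUnit_iff_ne_zero.mp ((Matrix.isUnit_iff_isUnit_det _).mp hM)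
  have hfun : (fun X : Matrix (Fin N) (Fin N) ℂ =>
      ((ξ • (1 : Matrix (Fin N) (Fin N) ℂ) - X)⁻¹ * A).trace)
      = fun X => ∑ p : Fin N, ∑ k : Fin N,
          (ξ • (1 : Matrix (Fin N) (Fin N) ℂ) - X)⁻¹ p k * A k p := by
    funext X
    simp [Matrix.trace, Matrix.diag, Matrix.mul_apply]
  have hφ : DifferentiableAt ℂ (fun X : Matrix (Fin N) (Fin N) ℂ =>
      ((ξ • (1 : Matrix (Fin N) (Fin N) ℂ) - X)⁻¹ * A).trace) M := by
    rw [hfun]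
    exact DifferentiableAt.fun_sum fun p _ => DifferentiableAt.fun_sum fun k _ =>
      (mydiff_res hdet p k).mul_const _
  constructor
  · exact hφ.smul_const B
  · simp only [matrixDivergence]
    have hstep : ∀ i j : Fin N,
        fderiv ℂ (fun X : Matrix (Fin N) (Fin N) ℂ =>
          (((ξ • (1 : Matrix (Fin N) (Fin N) ℂ) - X)⁻¹ * A).trace • B) i j) M
          (Matrix.single i j (1 : ℂ))
        = B i j * (fderiv ℂ (fun X : Matrix (Fin N) (Fin N) ℂ =>
            ((ξ • (1 : Matrix (Fin N) (Fin N) ℂ) - X)⁻¹ * A).trace) M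
            (Matrix.single i j (1 : ℂ))) := by
      intro i j
      have h1 : (fun X : Matrix (Fin N) (Fin N) ℂ =>
          (((ξ • (1 : Matrix (Fin N) (Fin N) ℂ) - X)⁻¹ * A).trace • B) i j)
          = fun X => ((ξ • (1 : Matrix (Fin N) (Fin N) ℂ) - X)⁻¹ * A).trace * B i j := by
        funext X; simp [Matrix.smul_apply, smul_eq_mul]
      rw [h1]; erw [fderiv_mul_const hφ (B i j)]
      rfl
    have hder : ∀ i j : Fin N,
        fderiv ℂ (fun X : Matrix (Fin N) (Fin N) ℂ =>
          ((ξ • (1 : Matrix (Fin N) (Fin N) ℂ) - X)⁻¹ * A).trace) M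
          (Matrix.single i j (1 : ℂ))
        = ∑ p : Fin N, ∑ k : Fin N, A k p *
            (((ξ • (1 : Matrix (Fin N) (Fin N) ℂ) - M)⁻¹ p i) *
             ((ξ • (1 : Matrix (Fin N) (Fin N) ℂ) - M)⁻¹ j k)) := by
      intro i j
      rw [hfun]
      erw [fderiv_fun_sum (fun p _ => DifferentiableAt.fun_sum fun k _ =>
        (mydiff_res hdet p k).mul_const _)]
      refine (map_sum (ContinuousLinearMap.apply ℂ ℂ (Matrix.single i j (1 : ℂ))) _ _).trans ?_
      refine Finset.sum_congr rfl fun p _ => ?_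
      erw [fderiv_fun_sum (fun k _ => (mydiff_res hdet p k).mul_const _)]
      refine (map_sum (ContinuousLinearMap.apply ℂ ℂ (Matrix.single i j (1 : ℂ))) _ _).trans ?_
      refine Finset.sum_congr rfl fun k _ => ?_
      erw [fderiv_mul_const (mydiff_res hdet p k)]
      erw [show (A k p • fderiv ℂ (fun X : Matrix (Fin N) (Fin N) ℂ =>
          (ξ • (1 : Matrix (Fin N) (Fin N) ℂ) - X)⁻¹ p k) M) (Matrix.single i j (1 : ℂ))
          = A k p • fderiv ℂ (fun X : Matrix (Fin N) (Fin N) ℂ =>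
          (ξ • (1 : Matrix (Fin N) (Fin N) ℂ) - X)⁻¹ p k) M (Matrix.single i j (1 : ℂ)) from rfl,
        key hdet, mul_std_mul]
      simp [smul_eq_mul, mul_comm]
    calc ∑ i : Fin N, ∑ j : Fin N,
        fderiv ℂ (fun X : Matrix (Fin N) (Fin N) ℂ =>
          (((ξ • (1 : Matrix (Fin N) (Fin N) ℂ) - X)⁻¹ * A).trace • B) i j) M
          (Matrix.single i j (1 : ℂ))
        = ∑ i : Fin N, ∑ j : Fin N, B i j * (∑ p : Fin N, ∑ k : Fin N, A k p *
            (((ξ • (1 : Matrix (Fin N) (Fin N) ℂ) - M)⁻¹ p i) *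
             ((ξ • (1 : Matrix (Fin N) (Fin N) ℂ) - M)⁻¹ j k))) := by
          refine Finset.sum_congr rfl fun i _ => Finset.sum_congr rfl fun j _ => ?_
          rw [hstep i j, hder i j]
    _ = ((ξ • (1 : Matrix (Fin N) (Fin N) ℂ) - M)⁻¹ * A *
            (ξ • (1 : Matrix (Fin N) (Fin N) ℂ) - M)⁻¹ * B).trace := alg_trace _ _ _
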